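/- Suppose Δ'Δ is positive definite and {β^{(k)}} is a generalized OEM sequence such that l(β^{(k+1)}) < l(β^{(k)}) whenever β^{(k)} ∈ Θ \ S. Then ‖β^{(k+1)} − β^{(k)}‖ → 0 as k → ∞. (Indeed ‖Δβ^{(k+1)} − Δβ^{(k)}‖² ≤ l(β^{(k)}) − l(β^{(k+1)}) for every k, and l(β^{(k)}) converges.) -/

import Mathlib

open Filter Topology Matrix

/-- Matrix–vector multiplication viewed as a map between Euclidean spaces. -/
noncomputable def mulVecE {n p : ℕ} (X : Matrix (Fin n) (Fin p) ℝ)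
    (β : EuclideanSpace ℝ (Fin p)) : EuclideanSpace ℝ (Fin n) :=
  (WithLp.equiv 2 (Fin n → ℝ)).symm (X.mulVec ((WithLp.equiv 2 (Fin p → ℝ)) β))

/-- The objective function `l(β) = ‖Y − Xβ‖² + P(β)`. -/
noncomputable def lfun {n p : ℕ} (X : Matrix (Fin n) (Fin p) ℝ)
    (Y : EuclideanSpace ℝ (Fin n)) (P : EuclideanSpace ℝ (Fin p) → ℝ)
    (β : EuclideanSpace ℝ (Fin p)) : ℝ :=
  ‖Y - mulVecE X β‖ ^ 2 + P β

/-- `Q(β ∣ φ) = ‖Y − Xβ‖² + ‖Δφ − Δβ‖² + P(β)`. -/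
noncomputable def Qfun {n m p : ℕ} (X : Matrix (Fin n) (Fin p) ℝ)
    (Y : EuclideanSpace ℝ (Fin n)) (Δ : Matrix (Fin m) (Fin p) ℝ)
    (P : EuclideanSpace ℝ (Fin p) → ℝ)
    (β φ : EuclideanSpace ℝ (Fin p)) : ℝ :=
  ‖Y - mulVecE X β‖ ^ 2 + ‖mulVecE Δ φ - mulVecE Δ β‖ ^ 2 + P β

/-- `β ∈ Θ` is a stationary point of `l` if
`liminf_{t→0⁺} [l((1−t)β + tφ) − l(β)]/t ≥ 0` for every `φ ∈ Θ`. -/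
def IsStationaryPt {p : ℕ} (Θ : Set (EuclideanSpace ℝ (Fin p)))
    (l : EuclideanSpace ℝ (Fin p) → ℝ) (β : EuclideanSpace ℝ (Fin p)) : Prop :=
  β ∈ Θ ∧ ∀ φ ∈ Θ,
    0 ≤ liminf (fun t : ℝ => (l ((1 - t) • β + t • φ) - l β) / t) (𝓝[>] 0)

/-- An injective linear map between Euclidean spaces is anti-Lipschitz. -/
lemma antilip_of_injective {n p : ℕ}
    (T : EuclideanSpace ℝ (Fin p) →ₗ[ℝ] EuclideanSpace ℝ (Fin n))
    (hinj : Function.Injective T) : ∃ C : ℝ, ∀ v, ‖v‖ ≤ C * ‖T v‖ := by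
  let e := LinearEquiv.ofInjective T hinj
  let g : LinearMap.range T →L[ℝ] EuclideanSpace ℝ (Fin p) :=
    LinearMap.toContinuousLinearMap (e.symm : LinearMap.range T →ₗ[ℝ] _)
  refine ⟨‖g‖, fun v => ?_⟩
  have h1 : g (e v) = v := e.symm_apply_apply v
  calc ‖v‖ = ‖g (e v)‖ := by rw [h1]
    _ ≤ ‖g‖ * ‖e v‖ := g.le_opNorm _
    _ = ‖g‖ * ‖T v‖ := rfl

/-- If `ΔᵀΔ` is positive definite then `β ↦ Δβ` is injective. -/
lemma toEuclideanLin_injective_of_posdef {m p : ℕ} (Δ : Matrix (Fin m) (Fin p) ℝ)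
    (hposdef : (Δᵀ * Δ).PosDef) :
    Function.Injective (Matrix.toEuclideanLin Δ) := by
  rw [injective_iff_map_eq_zero]
  intro v hv
  by_contra hne
  have hv' : Δ *ᵥ (WithLp.equiv 2 (Fin p → ℝ)) v = 0 := by
    have := congrArg (WithLp.equiv 2 (Fin m → ℝ)) hv
    simpa using this
  have h2 := hposdef.dotProduct_mulVec_pos (x := (WithLp.equiv 2 (Fin p → ℝ)) v) (by
    intro h; exact hne (by simpa using congrArg (WithLp.equiv 2 (Fin p → ℝ)).symm h))
  rw [← mulVec_mulVec, hv', mulVec_zero, dotProduct_zero] at h2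
  exact lt_irrefl _ h2

/-- If `ΔᵀΔ` is positive definite and `{β⁽ᵏ⁾}` is a generalized OEM sequence with
the strict-descent property, then `‖β⁽ᵏ⁺¹⁾ − β⁽ᵏ⁾‖ → 0`; indeed
`‖Δβ⁽ᵏ⁺¹⁾ − Δβ⁽ᵏ⁾‖² ≤ l(β⁽ᵏ⁾) − l(β⁽ᵏ⁺¹⁾)` for every `k`, and `l(β⁽ᵏ⁾)`
converges. -/
theorem stmt6 {n m p : ℕ} (X : Matrix (Fin n) (Fin p) ℝ)
    (Y : EuclideanSpace ℝ (Fin n)) (Δ : Matrix (Fin m) (Fin p) ℝ)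
    (Θ : Set (EuclideanSpace ℝ (Fin p))) (P : EuclideanSpace ℝ (Fin p) → ℝ)
    (hΘclosed : IsClosed Θ) (hΘconv : Convex ℝ Θ)
    (hPcont : ContinuousOn P Θ)
    (hPcoer : ∀ C : ℝ, ∃ R : ℝ, ∀ β, R ≤ ‖β‖ → C ≤ P β)
    (hposdef : (Δᵀ * Δ).PosDef)
    (βs : ℕ → EuclideanSpace ℝ (Fin p)) (hmem : ∀ k, βs k ∈ Θ)
    (hQ : ∀ k, Qfun X Y Δ P (βs (k + 1)) (βs k) ≤ Qfun X Y Δ P (βs k) (βs k))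
    (hdesc : ∀ k, ¬ IsStationaryPt Θ (lfun X Y P) (βs k) →
      lfun X Y P (βs (k + 1)) < lfun X Y P (βs k)) :
    Tendsto (fun k => ‖βs (k + 1) - βs k‖) atTop (𝓝 0) ∧
    (∀ k, ‖mulVecE Δ (βs (k + 1)) - mulVecE Δ (βs k)‖ ^ 2
        ≤ lfun X Y P (βs k) - lfun X Y P (βs (k + 1))) ∧
    ∃ lstar, Tendsto (fun k => lfun X Y P (βs k)) atTop (𝓝 lstar) := by
  -- the key inequality
  have key : ∀ k, ‖mulVecE Δ (βs (k + 1)) - mulVecE Δ (βs k)‖ ^ 2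
      ≤ lfun X Y P (βs k) - lfun X Y P (βs (k + 1)) := by
    intro k
    have h := hQ k
    simp only [Qfun, lfun, sub_self, norm_zero] at h ⊢
    rw [norm_sub_rev]
    nlinarith [h]
  -- l(βs k) is antitone
  have anti : Antitone (fun k => lfun X Y P (βs k)) := by
    refine antitone_nat_of_succ_le (fun k => ?_)
    have := key k
    nlinarith [sq_nonneg ‖mulVecE Δ (βs (k + 1)) - mulVecE Δ (βs k)‖]
  -- P is bounded below on Θ
  obtain ⟨R, hR⟩ := hPcoer 0
  have hB : ∃ B : ℝ, ∀ β ∈ Θ, B ≤ P β := by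
    have hKc : IsCompact (Θ ∩ Metric.closedBall 0 R) :=
      (isCompact_closedBall (0 : EuclideanSpace ℝ (Fin p)) R).inter_left hΘclosed
    by_cases hne : (Θ ∩ Metric.closedBall 0 R).Nonempty
    · obtain ⟨x, hx, hmin⟩ := hKc.exists_isMinOn hne (hPcont.mono Set.inter_subset_left)
      refine ⟨min (P x) 0, fun β hβ => ?_⟩
      by_cases hb : β ∈ Metric.closedBall (0 : EuclideanSpace ℝ (Fin p)) R
      · exact le_trans (min_le_left _ _) (hmin ⟨hβ, hb⟩)
      · refine le_trans (min_le_right _ _) (hR β ?_)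
        simp only [Metric.mem_closedBall, dist_zero_right, not_le] at hb
        exact hb.le
    · refine ⟨0, fun β hβ => hR β ?_⟩
      by_contra hlt
      exact hne ⟨β, hβ, by simpa [Metric.mem_closedBall, dist_zero_right] using
        (not_le.mp hlt).le⟩
  obtain ⟨B, hB⟩ := hB
  -- l(βs k) is bounded below, hence converges
  have hbdd : ∀ k, B ≤ lfun X Y P (βs k) := fun k => by
    have := hB (βs k) (hmem k)
    have h2 : (0:ℝ) ≤ ‖Y - mulVecE X (βs k)‖ ^ 2 := sq_nonneg _
    simp only [lfun]; linarith
  have htend : Tendsto (fun k => lfun X Y P (βs k)) atTop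
      (𝓝 (⨅ k, lfun X Y P (βs k))) :=
    tendsto_atTop_ciInf anti ⟨B, by rintro x ⟨k, rfl⟩; exact hbdd k⟩
  -- differences tend to 0
  have hdiff : Tendsto (fun k => lfun X Y P (βs k) - lfun X Y P (βs (k + 1)))
      atTop (𝓝 0) := by
    have h2 : Tendsto (fun k => lfun X Y P (βs (k + 1))) atTop
        (𝓝 (⨅ k, lfun X Y P (βs k))) := htend.comp (tendsto_add_atTop_nat 1)
    simpa using htend.sub h2
  have hsq : Tendsto (fun k => ‖mulVecE Δ (βs (k + 1)) - mulVecE Δ (βs k)‖ ^ 2)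
      atTop (𝓝 0) :=
    squeeze_zero (fun k => sq_nonneg _) key hdiff
  have hnorm : Tendsto (fun k => ‖mulVecE Δ (βs (k + 1)) - mulVecE Δ (βs k)‖)
      atTop (𝓝 0) := by
    have := hsq.sqrt
    simp only [Real.sqrt_zero] at this
    refine this.congr (fun k => Real.sqrt_sq (norm_nonneg _))
  -- anti-Lipschitz bound
  obtain ⟨C, hC⟩ := antilip_of_injective (Matrix.toEuclideanLin Δ)
    (toEuclideanLin_injective_of_posdef Δ hposdef)
  have hTsub : ∀ k, (Matrix.toEuclideanLin Δ) (βs (k + 1) - βs k)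
      = mulVecE Δ (βs (k + 1)) - mulVecE Δ (βs k) := fun k => by
    rw [map_sub]; rfl
  refine ⟨?_, key, ⟨_, htend⟩⟩
  have hmul : Tendsto (fun k => C * ‖mulVecE Δ (βs (k + 1)) - mulVecE Δ (βs k)‖)
      atTop (𝓝 0) := by
    simpa using (tendsto_const_nhds (x := C) (f := atTop)).mul hnorm
  refine squeeze_zero (fun k => norm_nonneg _) (fun k => ?_) hmul
  calc ‖βs (k + 1) - βs k‖
      ≤ C * ‖(Matrix.toEuclideanLin Δ) (βs (k + 1) - βs k)‖ := hC _
    _ = C * ‖mulVecE Δ (βs (k + 1)) - mulVecE Δ (βs k)‖ := by rw [hTsub]
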